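/- For every integer n ≥ 0, the number of 3-Motzkin paths of length n equals the number of Schröder paths of length 2(n+1) having no peak of odd height. -/

import Mathlib

/-- Steps of a 3-Motzkin path: `U = (1,1)`, `D = (1,-1)` and three
labeled horizontal steps `H0, H1, H2` (each equal to `(1,0)`). -/
inductive MStep : Type
  | U : MStep
  | D : MStep
  | H0 : MStep
  | H1 : MStep
  | H2 : MStep
  deriving DecidableEq

/-- The contribution of a step to the y-coordinate. -/
def MStep.eff : MStep → ℤ
  | U => 1
  | D => -1
  | H0 => 0
  | H1 => 0
  | H2 => 0

/-- The height (y-coordinate of the starting point) of the `i`-th step (0-indexed). -/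
def mHeight (L : List MStep) (i : ℕ) : ℤ := ((L.take i).map MStep.eff).sum

/-- `L` is a 3-Motzkin path of length `n`: it has `n` steps, ends at height `0`,
and never goes below the x-axis. -/
def IsMotzkin3 (L : List MStep) (n : ℕ) : Prop :=
  L.length = n ∧ (L.map MStep.eff).sum = 0 ∧ ∀ i, 0 ≤ mHeight L i

/-- The number of `H2` steps of `L` of positive height. -/
def posH2Steps (L : List MStep) : ℕ :=
  ((Finset.range L.length).filter
    (fun i => L[i]? = some MStep.H2 ∧ 0 < mHeight L i)).card

/-- Steps of a Schröder path: `U = (1,1)`, `D = (1,-1)`, `H = H² = (2,0)`. -/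
inductive SStep : Type
  | U : SStep
  | D : SStep
  | H : SStep
  deriving DecidableEq

/-- The contribution of a step to the x-coordinate. -/
def SStep.len : SStep → ℕ
  | U => 1
  | D => 1
  | H => 2

/-- The contribution of a step to the y-coordinate. -/
def SStep.eff : SStep → ℤ
  | U => 1
  | D => -1
  | H => 0

/-- The height (y-coordinate of the starting point) of the `i`-th step (0-indexed);
for `i = L.length` this is the final height of the path. -/
def sHeight (L : List SStep) (i : ℕ) : ℤ := ((L.take i).map SStep.eff).sum

/-- `L` is a Schröder path of length `2 * n`: it has total horizontal displacement `2 * n`,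
ends at height `0`, and never goes below the x-axis. -/
def IsSchroder (L : List SStep) (n : ℕ) : Prop :=
  (L.map SStep.len).sum = 2 * n ∧ (L.map SStep.eff).sum = 0 ∧ ∀ i, 0 ≤ sHeight L i

/-- A peak at position `i`: an up step immediately followed by a down step.
The height of this peak is `sHeight L (i+1)`, the height of its down step. -/
def IsPeakAt (L : List SStep) (i : ℕ) : Prop :=
  L[i]? = some SStep.U ∧ L[i+1]? = some SStep.D

/-- `L` has no peak of odd height. -/
def NoOddPeak (L : List SStep) : Prop :=
  ∀ i, IsPeakAt L i → ¬ Odd (sHeight L (i+1))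

/-- `L` has no peak of even height. -/
def NoEvenPeak (L : List SStep) : Prop :=
  ∀ i, IsPeakAt L i → ¬ Even (sHeight L (i+1))

/-- `L` is UH-free: no up step is immediately followed by a horizontal step. -/
def UHFree (L : List SStep) : Prop :=
  ∀ i, ¬ (L[i]? = some SStep.U ∧ L[i+1]? = some SStep.H)

/-- The number of peaks of `L` of even height greater than `2`. -/
def evenHighPeaks (L : List SStep) : ℕ :=
  ((Finset.range L.length).filter
    (fun i => L[i]? = some SStep.U ∧ L[i+1]? = some SStep.D ∧
      Even (sHeight L (i+1)) ∧ 2 < sHeight L (i+1))).card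

namespace S1
variable {α : Type*} (f : α → ℤ)

/-- height of position i: sum of f over first i entries -/
def hts (L : List α) (i : ℕ) : ℤ := ((L.take i).map f).sum

@[simp] lemma hts_zero (L : List α) : hts f L 0 = 0 := rfl

@[simp] lemma hts_nil (i : ℕ) : hts f ([] : List α) i = 0 := by simp [hts]

@[simp] lemma hts_cons (x : α) (L : List α) (i : ℕ) :
    hts f (x :: L) (i+1) = f x + hts f L i := by simp [hts]

lemma hts_succ (L : List α) {i : ℕ} (h : i < L.length) :
    hts f L (i+1) = hts f L i + f L[i] := by
  simp only [hts, List.map_take]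
  rw [List.take_succ]
  simp [List.getElem?_map, List.getElem?_eq_getElem h]

lemma hts_of_length_le (L : List α) {i : ℕ} (h : L.length ≤ i) :
    hts f L i = (L.map f).sum := by
  simp [hts, List.take_of_length_le h]

lemma hts_append_of_le (X Y : List α) {i : ℕ} (h : i ≤ X.length) :
    hts f (X ++ Y) i = hts f X i := by
  simp [hts, List.take_append, Nat.sub_eq_zero_of_le h]

lemma hts_append_add (X Y : List α) (i : ℕ) :
    hts f (X ++ Y) (X.length + i) = (X.map f).sum + hts f Y i := by
  rw [hts, List.take_append, List.map_append, List.sum_append,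
    List.take_of_length_le (by omega), Nat.add_sub_cancel_left]
  rfl

lemma hts_append (X Y : List α) (i : ℕ) (h : X.length ≤ i) :
    hts f (X ++ Y) i = (X.map f).sum + hts f Y (i - X.length) := by
  have := hts_append_add f X Y (i - X.length)
  rwa [Nat.add_sub_cancel' h] at this

/-- nonnegative path -/
def NN (L : List α) : Prop := ∀ i, 0 ≤ hts f L i

lemma NN_append {X Y : List α} (hX : NN f X) (hs : (X.map f).sum = 0) (hY : NN f Y) :
    NN f (X ++ Y) := by
  intro i
  rcases le_or_gt i X.length with h | h
  · rw [hts_append_of_le f X Y h]; exact hX i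
  · rw [hts_append f X Y i h.le, hs, zero_add]; exact hY _

lemma NN_cons_tail {x : α} {L : List α} (h : NN f (x :: L)) (hx : f x = 0) : NN f L := by
  intro i
  have := h (i+1)
  rw [hts_cons, hx, zero_add] at this
  exact this

lemma NN_cons_of {x : α} {L : List α} (hx : 0 ≤ f x) (h : NN f L) : NN f (x :: L) := by
  intro i
  cases i with
  | zero => simp
  | succ i => rw [hts_cons]; have := h i; omega

lemma bal_up_down (u d : α) (hu : f u = 1) (hd : f d = -1) {X Y : List α}
    (hX : (X.map f).sum = 0) (hXN : NN f X) (hY : (Y.map f).sum = 0) (hYN : NN f Y) :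
    ((u :: X ++ d :: Y).map f).sum = 0 ∧ NN f (u :: X ++ d :: Y) := by
  constructor
  · simp [hu, hd, hX, hY]
  · intro i
    cases i with
    | zero => simp
    | succ i =>
      rw [show (u :: X ++ d :: Y) = u :: (X ++ d :: Y) by rfl, hts_cons, hu]
      rcases le_or_gt i X.length with h | h
      · rw [hts_append_of_le f X _ h]; have := hXN i; omega
      · rw [hts_append f X _ i h.le, hX]
        obtain ⟨j, hj⟩ : ∃ j, i - X.length = j + 1 := ⟨i - X.length - 1, by omega⟩
        rw [hj, hts_cons, hd]
        have := hYN j; omega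

lemma getElem?_cons_append (u d : α) (X Y : List α) (i : ℕ) :
    (u :: X ++ d :: Y)[i]? =
      if i = 0 then some u
      else if i ≤ X.length then X[i-1]?
      else if i = X.length + 1 then some d
      else Y[i - X.length - 2]? := by
  cases i with
  | zero => simp
  | succ i =>
    have h1 : (u :: X ++ d :: Y)[i+1]? = (X ++ d :: Y)[i]? :=
      List.getElem?_cons_succ ..
    rw [h1]
    rcases lt_or_ge i X.length with h | h
    · rw [List.getElem?_append, if_pos h]
      simp only [if_neg (Nat.succ_ne_zero i), if_pos (by omega : i + 1 ≤ X.length)]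
      simp
    · rw [List.getElem?_append_right h]
      rcases Nat.eq_or_lt_of_le h with h2 | h2
      · rw [← h2, Nat.sub_self]
        simp only [if_neg (Nat.succ_ne_zero i), if_neg (by omega : ¬ i + 1 ≤ X.length),
          if_pos (by omega : i + 1 = X.length + 1)]
        simp
      · obtain ⟨j, hj⟩ : ∃ j, i - X.length = j + 1 := ⟨i - X.length - 1, by omega⟩
        rw [hj]
        simp only [if_neg (Nat.succ_ne_zero i), if_neg (by omega : ¬ i + 1 ≤ X.length),
          if_neg (by omega : ¬ i + 1 = X.length + 1)]
        have : i + 1 - X.length - 2 = j := by omega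
        rw [this]
        simp

lemma hts_cons_append {u d : α} (hu : f u = 1) (hd : f d = -1) {X : List α} (Y : List α)
    (hX : (X.map f).sum = 0) (i : ℕ) :
    hts f (u :: X ++ d :: Y) i =
      if i = 0 then 0
      else if i ≤ X.length + 1 then 1 + hts f X (i-1)
      else hts f Y (i - X.length - 2) := by
  cases i with
  | zero => simp
  | succ i =>
    rw [show (u :: X ++ d :: Y) = u :: (X ++ d :: Y) from rfl, hts_cons, hu]
    rcases le_or_gt i X.length with h | h
    · rw [hts_append_of_le f X _ h]
      simp only [if_neg (Nat.succ_ne_zero i), if_pos (by omega : i + 1 ≤ X.length + 1)]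
      rfl
    · rw [hts_append f X _ i h.le, hX]
      obtain ⟨j, hj⟩ : ∃ j, i - X.length = j + 1 := ⟨i - X.length - 1, by omega⟩
      rw [hj, hts_cons, hd]
      simp only [if_neg (Nat.succ_ne_zero i), if_neg (by omega : ¬ i + 1 ≤ X.length + 1)]
      have : i + 1 - X.length - 2 = j := by omega
      rw [this]
      ring

/-- first-return decomposition: existence -/
lemma firstReturn (d : α) (L : List α)
    (hge : ∀ x ∈ L, -1 ≤ f x)
    (hd : ∀ x ∈ L, f x = -1 → x = d)
    (hsum : (L.map f).sum = -1)
    (hnn : ∀ i, -1 ≤ hts f L i) :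
    ∃ P Q, L = P ++ d :: Q ∧ (P.map f).sum = 0 ∧ NN f P ∧
      (Q.map f).sum = 0 ∧ NN f Q := by
  classical
  have hex : ∃ j, hts f L j = -1 := ⟨L.length, by rw [hts_of_length_le f L le_rfl]; exact hsum⟩
  have hjspec : hts f L (Nat.find hex) = -1 := Nat.find_spec hex
  have hjmin : ∀ k < Nat.find hex, hts f L k ≠ -1 := fun k hk => Nat.find_min hex hk
  have hj0 : Nat.find hex ≠ 0 := by intro h; rw [h] at hjspec; simp [hts] at hjspec
  obtain ⟨i, hi⟩ : ∃ i, Nat.find hex = i + 1 := ⟨Nat.find hex - 1, by omega⟩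
  rw [hi] at hjspec hjmin
  have hjle : i + 1 ≤ L.length := by
    by_contra hcon
    exact hjmin L.length (by omega) (by rw [hts_of_length_le f L le_rfl]; exact hsum)
  have hilt : i < L.length := hjle
  set x := L[i] with hx
  have hmem : x ∈ L := List.getElem_mem hilt
  have hLsplit : L = L.take i ++ x :: L.drop (i+1) := by
    conv_lhs => rw [← List.take_append_drop i L]
    rw [List.drop_eq_getElem_cons hilt]
  have hstep : hts f L (i+1) = hts f L i + f x := hts_succ f L hilt
  have hipos : 0 ≤ hts f L i := by
    have h1 := hnn i
    have h2 := hjmin i (by omega)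
    omega
  have hfx : f x = -1 ∧ hts f L i = 0 := by
    have h1 := hge x hmem
    have h2 : hts f L i + f x = -1 := by rw [← hstep]; exact hjspec
    constructor <;> omega
  refine ⟨L.take i, L.drop (i+1), ?_, ?_, ?_, ?_, ?_⟩
  · rw [← hd x hmem hfx.1]; exact hLsplit
  · exact hfx.2
  · intro k
    rcases le_or_gt i k with hk | hk
    · have : hts f (L.take i) k = hts f L i := by
        rw [hts_of_length_le f _ (le_trans (List.length_take_le i L) hk), hts]
      rw [this]; exact hipos
    · have : hts f (L.take i) k = hts f L k := by
        simp only [hts, List.take_take, min_eq_left hk.le]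
      rw [this]
      have h1 := hnn k
      have h2 := hjmin k (by omega)
      omega
  · have htot : (L.map f).sum = ((L.take i).map f).sum + f x + ((L.drop (i+1)).map f).sum := by
      conv_lhs => rw [hLsplit]
      simp [add_assoc]
    have h4 : ((L.take i).map f).sum = hts f L i := rfl
    rw [h4, hfx.2, hfx.1] at htot
    omega
  · intro k
    have heq : hts f L (i + 1 + k) = -1 + hts f (L.drop (i+1)) k := by
      conv_lhs => rw [hLsplit]
      have hlen : (L.take i).length = i := List.length_take_of_le hilt.le
      have h2 := hts_append_add f (L.take i) (x :: L.drop (i+1)) (1 + k)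
      rw [hlen] at h2
      rw [show i + 1 + k = i + (1 + k) by omega, h2]
      have : hts f (x :: L.drop (i+1)) (k + 1) = f x + hts f (L.drop (i+1)) k := hts_cons f x _ k
      rw [show 1 + k = k + 1 by omega, this, hfx.1]
      have hsP : ((L.take i).map f).sum = hts f L i := rfl
      rw [hsP, hfx.2]
      ring
    have := hnn (i + 1 + k)
    omega

/-- first-return decomposition: uniqueness of splitting -/
lemma split_unique {d : α} (hd : f d = -1) {P Q P' Q' : List α}
    (hP : (P.map f).sum = 0) (hP' : (P'.map f).sum = 0)
    (hN : NN f P) (hN' : NN f P')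
    (h : P ++ d :: Q = P' ++ d :: Q') : P = P' ∧ Q = Q' := by
  have key : ∀ (A B A' B' : List α), (A.map f).sum = 0 → (A'.map f).sum = 0 →
      NN f A → NN f A' → A ++ d :: B = A' ++ d :: B' → A.length ≤ A'.length →
      A.length = A'.length := by
    intro A B A' B' hA hA' hNA hNA' heq hle
    by_contra hne
    have hlt : A.length < A'.length := lt_of_le_of_ne hle hne
    have h1 : hts f (A ++ d :: B) (A.length + 1) = -1 := by
      rw [hts_append_add f A (d :: B) 1]
      rw [hA]
      simp [hts, hd]
    have h2 : hts f (A' ++ d :: B') (A.length + 1) = hts f A' (A.length + 1) := by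
      exact hts_append_of_le f A' (d :: B') (by omega)
    rw [heq, h2] at h1
    have := hNA' (A.length + 1)
    omega
  have hlen : P.length = P'.length := by
    rcases le_total P.length P'.length with hle | hle
    · exact key P Q P' Q' hP hP' hN hN' h hle
    · exact (key P' Q' P Q hP' hP hN' hN h.symm hle).symm
  obtain ⟨h1, h2⟩ := List.append_inj h hlen
  exact ⟨h1, by injection h2⟩


-- ## Trees for 3-Motzkin paths
inductive TM : Type
  | nil : TM
  | h0 (r : TM) : TM
  | h1 (r : TM) : TM
  | h2 (r : TM) : TM
  | ud (p r : TM) : TM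

-- ## Trees for (A = no-odd-peak, B = no-even-peak) Schröder paths
mutual
inductive TA : Type
  | anil : TA
  | acons (b : TB) (a : TA) : TA
inductive TB : Type
  | bnil : TB
  | bh (r : TB) : TB
  | bud (a : TA) (r : TB) : TB
end

open TM TA TB MStep SStep

def wM : TM → ℕ
  | .nil => 0
  | .h0 r => wM r + 1
  | .h1 r => wM r + 1
  | .h2 r => wM r + 1
  | .ud p r => wM p + wM r + 2

mutual
def wA : TA → ℕ
  | .anil => 0
  | .acons b a => wB b + wA a + 1
def wB : TB → ℕ
  | .bnil => 0
  | .bh r => wB r + 1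
  | .bud a r => wA a + wB r + 1
end

def fM : TM → List MStep
  | .nil => []
  | .h0 r => .H0 :: fM r
  | .h1 r => .H1 :: fM r
  | .h2 r => .H2 :: fM r
  | .ud p r => .U :: fM p ++ .D :: fM r

mutual
def fA : TA → List SStep
  | .anil => []
  | .acons .bnil a => .H :: fA a
  | .acons (.bh r) a => .U :: fB (.bh r) ++ .D :: fA a
  | .acons (.bud a' r) a => .U :: fB (.bud a' r) ++ .D :: fA a
def fB : TB → List SStep
  | .bnil => []
  | .bh r => .H :: fB r
  | .bud a r => .U :: fA a ++ .D :: fB r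
end

-- ## the bijection on trees
def θ : TB → TA → TM
  | .bnil, .anil => .nil
  | .bnil, .acons b' a' => .h2 (θ b' a')
  | .bh r, a => .h0 (θ r a)
  | .bud .anil r, a => .h1 (θ r a)
  | .bud (.acons b' a') r, a => .ud (θ b' a') (θ r a)
termination_by b a => sizeOf b + sizeOf a

def ψ : TM → TB × TA
  | .nil => (.bnil, .anil)
  | .h0 r => ((ψ r).1.bh, (ψ r).2)
  | .h1 r => (.bud .anil (ψ r).1, (ψ r).2)
  | .h2 r => (.bnil, .acons (ψ r).1 (ψ r).2)
  | .ud p r => (.bud (.acons (ψ p).1 (ψ p).2) (ψ r).1, (ψ r).2)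

lemma θψ : ∀ m, θ (ψ m).1 (ψ m).2 = m := by
  intro m
  induction m with
  | nil => simp only [ψ, θ]
  | h0 r ih => simp only [ψ, θ, ih]
  | h1 r ih => simp only [ψ, θ, ih]
  | h2 r ih => simp only [ψ, θ, ih]
  | ud p r ihp ihr => simp only [ψ, θ, ihp, ihr]

lemma ψθ : ∀ b a, ψ (θ b a) = (b, a) := by
  intro b a
  induction b, a using θ.induct with
  | case1 => simp only [θ, ψ]
  | case2 b' a' ih => simp only [θ, ψ, ih]
  | case3 r a ih => simp only [θ, ψ, ih]
  | case4 r a ih => simp only [θ, ψ, ih]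
  | case5 b' a' r a ih1 ih2 => simp only [θ, ψ, ih1, ih2]

lemma wψ : ∀ m, wB (ψ m).1 + wA (ψ m).2 = wM m := by
  intro m
  induction m with
  | nil => simp only [ψ, wB, wA, wM]
  | h0 r ih => simp only [ψ, wB, wM]; omega
  | h1 r ih => simp only [ψ, wB, wA, wM]; omega
  | h2 r ih => simp only [ψ, wB, wA, wM]; omega
  | ud p r ihp ihr => simp only [ψ, wB, wA, wM]; omega

-- ## Motzkin side

lemma eff_ge (x : MStep) : -1 ≤ MStep.eff x := by cases x <;> simp [MStep.eff]

lemma eff_eq_neg_one {x : MStep} (h : MStep.eff x = -1) : x = MStep.D := by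
  cases x <;> simp_all [MStep.eff]

lemma fM_spec : ∀ t, ((fM t).map MStep.eff).sum = 0 ∧ NN MStep.eff (fM t) ∧
    (fM t).length = wM t := by
  intro t
  induction t with
  | nil => refine ⟨rfl, fun i => by simp [fM], rfl⟩
  | h0 r ih => exact ⟨by simp [fM, MStep.eff, ih.1],
      NN_cons_of _ (by simp [MStep.eff]) ih.2.1, by simp [fM, wM, ih.2.2]⟩
  | h1 r ih => exact ⟨by simp [fM, MStep.eff, ih.1],
      NN_cons_of _ (by simp [MStep.eff]) ih.2.1, by simp [fM, wM, ih.2.2]⟩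
  | h2 r ih => exact ⟨by simp [fM, MStep.eff, ih.1],
      NN_cons_of _ (by simp [MStep.eff]) ih.2.1, by simp [fM, wM, ih.2.2]⟩
  | ud p r ihp ihr =>
    obtain ⟨h1, h2⟩ := bal_up_down MStep.eff MStep.U MStep.D rfl rfl ihp.1 ihp.2.1 ihr.1 ihr.2.1
    exact ⟨h1, h2, by simp [fM, wM, ihp.2.2, ihr.2.2]; omega⟩

lemma fM_inj : ∀ t t', fM t = fM t' → t = t' := by
  intro t
  induction t with
  | nil => intro t' h; cases t' <;> simp [fM] at h ⊢
  | h0 r ih => intro t' h; cases t' <;> simp [fM] at h ⊢; exact ih _ h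
  | h1 r ih => intro t' h; cases t' <;> simp [fM] at h ⊢; exact ih _ h
  | h2 r ih => intro t' h; cases t' <;> simp [fM] at h ⊢; exact ih _ h
  | ud p r ihp ihr =>
    intro t' h
    cases t' with
    | ud p' r' =>
      simp only [fM] at h
      injection h with h1 h2
      obtain ⟨hP, hQ⟩ := split_unique MStep.eff (d := MStep.D) rfl
        (fM_spec p).1 (fM_spec p').1 (fM_spec p).2.1 (fM_spec p').2.1 h2
      rw [ihp _ hP, ihr _ hQ]
    | nil => simp [fM] at h
    | h0 r' => simp [fM] at h
    | h1 r' => simp [fM] at h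
    | h2 r' => simp [fM] at h

lemma fM_surj : ∀ n (L : List MStep), L.length ≤ n → ((L.map MStep.eff).sum = 0) →
    NN MStep.eff L → ∃ t, fM t = L := by
  intro n
  induction n with
  | zero =>
    intro L hl _ _
    rw [List.length_eq_zero_iff.mp (Nat.le_zero.mp hl)]
    exact ⟨.nil, rfl⟩
  | succ n ih =>
    intro L hl hs hn
    have hl' : ∀ (x : MStep) R, L = x :: R → R.length ≤ n := by
      rintro x R rfl; simp at hl; omega
    match L with
    | [] => exact ⟨.nil, rfl⟩
    | .H0 :: R =>
      obtain ⟨t, ht⟩ := ih R (hl' _ _ rfl)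
        (by simpa [MStep.eff] using hs) (NN_cons_tail _ hn rfl)
      exact ⟨.h0 t, by simp [fM, ht]⟩
    | .H1 :: R =>
      obtain ⟨t, ht⟩ := ih R (hl' _ _ rfl)
        (by simpa [MStep.eff] using hs) (NN_cons_tail _ hn rfl)
      exact ⟨.h1 t, by simp [fM, ht]⟩
    | .H2 :: R =>
      obtain ⟨t, ht⟩ := ih R (hl' _ _ rfl)
        (by simpa [MStep.eff] using hs) (NN_cons_tail _ hn rfl)
      exact ⟨.h2 t, by simp [fM, ht]⟩
    | .D :: R =>
      have := hn 1
      simp [hts, MStep.eff] at this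
    | .U :: R =>
      obtain ⟨P, Q, hsplit, hPs, hPn, hQs, hQn⟩ := firstReturn MStep.eff MStep.D R
        (fun x _ => eff_ge x) (fun x _ h => eff_eq_neg_one h)
        (by simp [MStep.eff] at hs; omega)
        (fun i => by have := hn (i+1); rw [hts_cons] at this; simp [MStep.eff] at this; omega)
      have hlen : R.length ≤ n := hl' _ _ rfl
      have hlenPQ : P.length + Q.length + 1 = R.length := by
        rw [hsplit]; simp; omega
      obtain ⟨tp, htp⟩ := ih P (by omega) hPs hPn
      obtain ⟨tq, htq⟩ := ih Q (by omega) hQs hQn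
      exact ⟨.ud tp tq, by simp [fM, htp, htq, hsplit]⟩

lemma isMotzkin_iff (L : List MStep) (n : ℕ) :
    IsMotzkin3 L n ↔ L.length = n ∧ (L.map MStep.eff).sum = 0 ∧ NN MStep.eff L :=
  Iff.rfl

noncomputable def eqvM (n : ℕ) : {m : TM // wM m = n} ≃ {L // IsMotzkin3 L n} := by
  apply Equiv.ofBijective (f := fun t => ⟨fM t.1, by
    obtain ⟨h1, h2, h3⟩ := fM_spec t.1
    exact ⟨by rw [h3, t.2], h1, h2⟩⟩)
  constructor
  · rintro ⟨t, ht⟩ ⟨t', ht'⟩ h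
    simp only [Subtype.mk.injEq] at h ⊢
    exact fM_inj _ _ h
  · rintro ⟨L, hL1, hL2, hL3⟩
    obtain ⟨t, ht⟩ := fM_surj L.length L le_rfl hL2 hL3
    refine ⟨⟨t, ?_⟩, by simp [ht]⟩
    rw [← (fM_spec t).2.2, ht, hL1]

-- ## Schröder side

lemma seff_ge (x : SStep) : -1 ≤ SStep.eff x := by cases x <;> simp [SStep.eff]

lemma seff_eq_neg_one {x : SStep} (h : SStep.eff x = -1) : x = SStep.D := by
  cases x <;> simp_all [SStep.eff]

/-- the first entry is not a down step -/
def HeadOK (L : List SStep) : Prop := ∀ x, L[0]? = some x → x ≠ SStep.D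

/-- the last entry is not an up step -/
def LastOK (L : List SStep) : Prop := ∀ i, i + 1 = L.length → L[i]? ≠ some SStep.U

lemma sHeight_eq (L : List SStep) (i : ℕ) : sHeight L i = hts SStep.eff L i := rfl

lemma fA_acons_ne (b : TB) (a : TA) (hb : b ≠ .bnil) :
    fA (.acons b a) = .U :: fB b ++ .D :: fA a := by
  cases b with
  | bnil => exact absurd rfl hb
  | bh r => rw [fA]
  | bud a' r => rw [fA]

lemma fB_ne_nil (b : TB) (hb : b ≠ .bnil) : fB b ≠ [] := by
  cases b with
  | bnil => exact absurd rfl hb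
  | bh r => rw [fB]; simp
  | bud a' r => rw [fB]; simp

-- peaks of `H :: R`
lemma peak_cons_H {R : List SStep} {i : ℕ} (h : IsPeakAt (SStep.H :: R) i) :
    ∃ j, i = j + 1 ∧ IsPeakAt R j ∧ sHeight (SStep.H :: R) (i+1) = sHeight R (j+1) := by
  obtain ⟨h1, h2⟩ := h
  cases i with
  | zero => simp at h1
  | succ j =>
    rw [List.getElem?_cons_succ] at h1 h2
    refine ⟨j, rfl, ⟨h1, h2⟩, ?_⟩
    rw [sHeight_eq, sHeight_eq, hts_cons]
    simp [SStep.eff]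

lemma peak_cons_H_lift {R : List SStep} {j : ℕ} (h : IsPeakAt R j) :
    IsPeakAt (SStep.H :: R) (j+1) := by
  constructor
  · rw [List.getElem?_cons_succ]; exact h.1
  · rw [List.getElem?_cons_succ]; exact h.2

-- peaks of `U :: X ++ D :: Y` where X is balanced
lemma peak_cases {X Y : List SStep} (hX : (X.map SStep.eff).sum = 0) {i : ℕ}
    (hp : IsPeakAt (SStep.U :: X ++ SStep.D :: Y) i) :
    (i = 0 ∧ (X = [] ∨ X[0]? = some SStep.D))
    ∨ (∃ j, i = j + 1 ∧ IsPeakAt X j ∧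
        sHeight (SStep.U :: X ++ SStep.D :: Y) (i+1) = 1 + sHeight X (j+1))
    ∨ (i = X.length ∧ 1 ≤ X.length ∧ X[X.length - 1]? = some SStep.U)
    ∨ (∃ j, i = X.length + 2 + j ∧ IsPeakAt Y j ∧
        sHeight (SStep.U :: X ++ SStep.D :: Y) (i+1) = sHeight Y (j+1)) := by
  obtain ⟨h1, h2⟩ := hp
  rw [getElem?_cons_append] at h1 h2
  by_cases hi0 : i = 0
  · subst hi0
    left
    refine ⟨rfl, ?_⟩
    by_cases hX0 : X.length = 0
    · exact Or.inl (List.length_eq_zero_iff.mp hX0)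
    · right
      simp only [if_neg (Nat.one_ne_zero), if_pos (by omega : 1 ≤ X.length)] at h2
      simpa using h2
  · by_cases hile : i + 1 ≤ X.length
    · right; left
      simp only [if_neg hi0, if_pos (by omega : i ≤ X.length)] at h1
      simp only [if_neg (Nat.succ_ne_zero i), if_pos hile] at h2
      obtain ⟨j, hj⟩ : ∃ j, i = j + 1 := ⟨i - 1, by omega⟩
      subst hj
      refine ⟨j, rfl, ⟨by simpa using h1, by simpa using h2⟩, ?_⟩
      rw [sHeight_eq, sHeight_eq, hts_cons_append SStep.eff (u := SStep.U) (d := SStep.D) rfl rfl Y hX]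
      simp only [if_neg (by omega : ¬ j + 1 + 1 = 0), if_pos (by omega : j + 1 + 1 ≤ X.length + 1)]
      congr 1
    · by_cases hieq : i = X.length
      · right; right; left
        have hX1 : 1 ≤ X.length := by omega
        subst hieq
        simp only [if_neg hi0, if_pos (le_refl X.length)] at h1
        exact ⟨rfl, hX1, h1⟩
      · by_cases hieq2 : i = X.length + 1
        · exfalso
          simp only [if_neg hi0, if_neg (by omega : ¬ i ≤ X.length), if_pos hieq2] at h1
          simp at h1
        · right; right; right
          obtain ⟨j, hj⟩ : ∃ j, i = X.length + 2 + j := ⟨i - X.length - 2, by omega⟩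
          subst hj
          simp only [if_neg hi0, if_neg (by omega : ¬ X.length + 2 + j ≤ X.length),
            if_neg hieq2] at h1
          simp only [if_neg (by omega : ¬ X.length + 2 + j + 1 = 0),
            if_neg (by omega : ¬ X.length + 2 + j + 1 ≤ X.length),
            if_neg (by omega : ¬ X.length + 2 + j + 1 = X.length + 1)] at h2
          have e1 : X.length + 2 + j - X.length - 2 = j := by omega
          have e2 : X.length + 2 + j + 1 - X.length - 2 = j + 1 := by omega
          rw [e1] at h1
          rw [e2] at h2
          refine ⟨j, rfl, ⟨h1, h2⟩, ?_⟩
          rw [sHeight_eq, sHeight_eq, hts_cons_append SStep.eff (u := SStep.U) (d := SStep.D) rfl rfl Y hX]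
          simp only [if_neg (by omega : ¬ X.length + 2 + j + 1 = 0),
            if_neg (by omega : ¬ X.length + 2 + j + 1 ≤ X.length + 1)]
          rw [e2]

lemma peak_lift_X {X Y : List SStep} {j : ℕ} (hp : IsPeakAt X j) :
    IsPeakAt (SStep.U :: X ++ SStep.D :: Y) (j+1) := by
  obtain ⟨hlt, -⟩ := List.getElem?_eq_some_iff.mp hp.2
  constructor
  · rw [getElem?_cons_append]
    simp only [if_neg (Nat.succ_ne_zero j), if_pos (by omega : j + 1 ≤ X.length)]
    simpa using hp.1
  · rw [getElem?_cons_append]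
    simp only [if_neg (by omega : ¬ j + 2 = 0), if_pos (by omega : j + 2 ≤ X.length)]
    simpa using hp.2

lemma peak_lift_Y {X Y : List SStep} {j : ℕ} (hp : IsPeakAt Y j) :
    IsPeakAt (SStep.U :: X ++ SStep.D :: Y) (X.length + 2 + j) := by
  constructor
  · rw [getElem?_cons_append]
    simp only [if_neg (by omega : ¬ X.length + 2 + j = 0),
      if_neg (by omega : ¬ X.length + 2 + j ≤ X.length),
      if_neg (by omega : ¬ X.length + 2 + j = X.length + 1)]
    have e1 : X.length + 2 + j - X.length - 2 = j := by omega
    rw [e1]; exact hp.1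
  · rw [getElem?_cons_append]
    simp only [if_neg (by omega : ¬ X.length + 2 + j + 1 = 0),
      if_neg (by omega : ¬ X.length + 2 + j + 1 ≤ X.length),
      if_neg (by omega : ¬ X.length + 2 + j + 1 = X.length + 1)]
    have e2 : X.length + 2 + j + 1 - X.length - 2 = j + 1 := by omega
    rw [e2]; exact hp.2

-- ## parity helpers
lemma even_of_odd_succ {h : ℤ} (ho : Odd (1 + h)) : Even h := by
  rcases ho with ⟨k, hk⟩; exact ⟨k, by omega⟩
lemma odd_of_even_succ {h : ℤ} (he : Even (1 + h)) : Odd h := by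
  rcases he with ⟨k, hk⟩; exact ⟨k - 1, by omega⟩
lemma odd_succ_of_even {h : ℤ} (he : Even h) : Odd (1 + h) := by
  rcases he with ⟨k, hk⟩; exact ⟨k, by omega⟩
lemma even_succ_of_odd {h : ℤ} (ho : Odd h) : Even (1 + h) := by
  rcases ho with ⟨k, hk⟩; exact ⟨k + 1, by omega⟩

-- ## structural lemmas for predicates

lemma noOddPeak_nil : NoOddPeak [] := by
  intro i hp; simp [IsPeakAt] at hp
lemma noEvenPeak_nil : NoEvenPeak [] := by
  intro i hp; simp [IsPeakAt] at hp
lemma headOK_nil : HeadOK [] := by intro x h; simp at h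
lemma lastOK_nil : LastOK [] := by intro i h; simp at h

lemma noOddPeak_cons_H {R : List SStep} (h : NoOddPeak R) : NoOddPeak (SStep.H :: R) := by
  intro i hp hodd
  obtain ⟨j, rfl, hpR, hh⟩ := peak_cons_H hp
  rw [hh] at hodd
  exact h j hpR hodd

lemma noEvenPeak_cons_H {R : List SStep} (h : NoEvenPeak R) : NoEvenPeak (SStep.H :: R) := by
  intro i hp heven
  obtain ⟨j, rfl, hpR, hh⟩ := peak_cons_H hp
  rw [hh] at heven
  exact h j hpR heven

lemma noOddPeak_cons_H' {R : List SStep} (h : NoOddPeak (SStep.H :: R)) : NoOddPeak R := by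
  intro j hp hodd
  refine h (j+1) (peak_cons_H_lift hp) ?_
  rw [sHeight_eq, hts_cons]
  simpa [SStep.eff, sHeight_eq] using hodd

lemma noEvenPeak_cons_H' {R : List SStep} (h : NoEvenPeak (SStep.H :: R)) : NoEvenPeak R := by
  intro j hp heven
  refine h (j+1) (peak_cons_H_lift hp) ?_
  rw [sHeight_eq, hts_cons]
  simpa [SStep.eff, sHeight_eq] using heven

lemma headOK_cons_H {R : List SStep} : HeadOK (SStep.H :: R) := by
  intro x h hx; subst hx; simp at h

lemma headOK_cons_U {R : List SStep} : HeadOK (SStep.U :: R) := by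
  intro x h hx; subst hx; simp at h

lemma lastOK_cons_H {R : List SStep} (h : LastOK R) : LastOK (SStep.H :: R) := by
  intro i hi
  cases i with
  | zero =>
    have : R.length = 0 := by simpa using hi
    intro hc; simp at hc
  | succ j =>
    rw [List.getElem?_cons_succ]
    exact h j (by simpa using hi)

lemma length_comp (X Y : List SStep) :
    (SStep.U :: X ++ SStep.D :: Y).length = X.length + Y.length + 2 := by
  simp; omega

lemma lastOK_comp {X Y : List SStep} (h : LastOK Y) :
    LastOK (SStep.U :: X ++ SStep.D :: Y) := by
  intro i hi hc
  rw [length_comp] at hi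
  rw [getElem?_cons_append] at hc
  by_cases hY : Y.length = 0
  · have : i = X.length + 1 := by omega
    simp only [if_neg (by omega : ¬ i = 0), if_neg (by omega : ¬ i ≤ X.length),
      if_pos this] at hc
    exact SStep.noConfusion (by injection hc)
  · have h2 : ¬ i ≤ X.length := by omega
    simp only [if_neg (by omega : ¬ i = 0), if_neg h2,
      if_neg (by omega : ¬ i = X.length + 1)] at hc
    exact h (i - X.length - 2) (by omega) hc

lemma noOdd_comp {X Y : List SStep} (hX : (X.map SStep.eff).sum = 0) (hXne : X ≠ [])
    (hXh : HeadOK X) (hXl : LastOK X) (hXp : NoEvenPeak X) (hYp : NoOddPeak Y) :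
    NoOddPeak (SStep.U :: X ++ SStep.D :: Y) := by
  intro i hp hodd
  rcases peak_cases hX hp with ⟨hi0, hc⟩ | ⟨j, rfl, hpX, hh⟩ | ⟨hi, h1, hlast⟩ | ⟨j, rfl, hpY, hh⟩
  · rcases hc with hc | hc
    · exact hXne hc
    · exact hXh _ hc rfl
  · rw [hh] at hodd
    exact hXp j hpX (even_of_odd_succ hodd)
  · exact hXl (X.length - 1) (by omega) hlast
  · rw [hh] at hodd
    exact hYp j hpY hodd

lemma noEven_comp {X Y : List SStep} (hX : (X.map SStep.eff).sum = 0)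
    (hXh : HeadOK X) (hXl : LastOK X) (hXp : NoOddPeak X) (hYp : NoEvenPeak Y) :
    NoEvenPeak (SStep.U :: X ++ SStep.D :: Y) := by
  intro i hp heven
  rcases peak_cases hX hp with ⟨hi0, hc⟩ | ⟨j, rfl, hpX, hh⟩ | ⟨hi, h1, hlast⟩ | ⟨j, rfl, hpY, hh⟩
  · rcases hc with hc | hc
    · subst hi0 hc
      rw [sHeight_eq] at heven
      have : hts SStep.eff (SStep.U :: ([] : List SStep) ++ SStep.D :: Y) 1 = 1 := by
        rw [show (SStep.U :: ([] : List SStep) ++ SStep.D :: Y) = SStep.U :: (SStep.D :: Y)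
          from rfl, hts_cons]
        simp [SStep.eff]
      rw [this] at heven
      rcases heven with ⟨k, hk⟩; omega
    · exact hXh _ hc rfl
  · rw [hh] at heven
    exact hXp j hpX (odd_of_even_succ heven)
  · exact hXl (X.length - 1) (by omega) hlast
  · rw [hh] at heven
    exact hYp j hpY heven

-- ## the full spec of flattened trees
def PA (t : TA) : Prop :=
  ((fA t).map SStep.len).sum = 2 * wA t ∧ ((fA t).map SStep.eff).sum = 0 ∧
  NN SStep.eff (fA t) ∧ NoOddPeak (fA t) ∧ HeadOK (fA t) ∧ LastOK (fA t)

def PB (t : TB) : Prop :=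
  ((fB t).map SStep.len).sum = 2 * wB t ∧ ((fB t).map SStep.eff).sum = 0 ∧
  NN SStep.eff (fB t) ∧ NoEvenPeak (fB t) ∧ HeadOK (fB t) ∧ LastOK (fB t)

lemma PA_nil : PA .anil := by
  refine ⟨rfl, rfl, fun i => by simp [fA], ?_, ?_, ?_⟩
  · show NoOddPeak []
    exact noOddPeak_nil
  · exact headOK_nil
  · exact lastOK_nil

lemma PB_nil : PB .bnil := by
  refine ⟨rfl, rfl, fun i => by simp [fB], ?_, ?_, ?_⟩
  · show NoEvenPeak []
    exact noEvenPeak_nil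
  · exact headOK_nil
  · exact lastOK_nil

lemma PA_cons_H {a : TA} (ha : PA a) : PA (.acons .bnil a) := by
  obtain ⟨h1, h2, h3, h4, h5, h6⟩ := ha
  have hL : fA (.acons .bnil a) = .H :: fA a := by rw [fA]
  rw [PA, hL]
  refine ⟨?_, ?_, ?_, ?_, ?_, ?_⟩
  · simp [SStep.len, h1, wA, wB]; ring
  · simp [SStep.eff, h2]
  · exact NN_cons_of _ (by simp [SStep.eff]) h3
  · exact noOddPeak_cons_H h4
  · exact headOK_cons_H
  · exact lastOK_cons_H h6

lemma PB_cons_H {b : TB} (hb : PB b) : PB (.bh b) := by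
  obtain ⟨h1, h2, h3, h4, h5, h6⟩ := hb
  have hL : fB (.bh b) = .H :: fB b := by rw [fB]
  rw [PB, hL]
  refine ⟨?_, ?_, ?_, ?_, ?_, ?_⟩
  · simp [SStep.len, h1, wB]; ring
  · simp [SStep.eff, h2]
  · exact NN_cons_of _ (by simp [SStep.eff]) h3
  · exact noEvenPeak_cons_H h4
  · exact headOK_cons_H
  · exact lastOK_cons_H h6

lemma PA_comp {b : TB} {a : TA} (hbne : b ≠ .bnil) (hb : PB b) (ha : PA a) :
    PA (.acons b a) := by
  obtain ⟨b1, b2, b3, b4, b5, b6⟩ := hb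
  obtain ⟨a1, a2, a3, a4, a5, a6⟩ := ha
  have hL : fA (.acons b a) = .U :: fB b ++ .D :: fA a := fA_acons_ne b a hbne
  obtain ⟨hsum, hnn⟩ := bal_up_down SStep.eff SStep.U SStep.D rfl rfl b2 b3 a2 a3
  rw [PA, hL]
  refine ⟨?_, hsum, hnn, ?_, headOK_cons_U, lastOK_comp a6⟩
  · simp [SStep.len, b1, a1, wA]; ring
  · exact noOdd_comp b2 (fB_ne_nil b hbne) b5 b6 b4 a4

lemma PB_comp {a : TA} {b : TB} (ha : PA a) (hb : PB b) : PB (.bud a b) := by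
  obtain ⟨a1, a2, a3, a4, a5, a6⟩ := ha
  obtain ⟨b1, b2, b3, b4, b5, b6⟩ := hb
  have hL : fB (.bud a b) = .U :: fA a ++ .D :: fB b := by rw [fB]
  obtain ⟨hsum, hnn⟩ := bal_up_down SStep.eff SStep.U SStep.D rfl rfl a2 a3 b2 b3
  rw [PB, hL]
  refine ⟨?_, hsum, hnn, ?_, headOK_cons_U, lastOK_comp b6⟩
  · simp [SStep.len, b1, a1, wB]; ring
  · exact noEven_comp a2 a5 a6 a4 b4

theorem AB_spec (n : ℕ) : (∀ t : TA, wA t ≤ n → PA t) ∧ (∀ t : TB, wB t ≤ n → PB t) := by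
  induction n with
  | zero =>
    constructor
    · intro t ht
      cases t with
      | anil => exact PA_nil
      | acons b a => simp [wA] at ht
    · intro t ht
      cases t with
      | bnil => exact PB_nil
      | bh r => simp [wB] at ht
      | bud a r => simp [wB] at ht
  | succ n ih =>
    constructor
    · intro t ht
      cases t with
      | anil => exact PA_nil
      | acons b a =>
        simp only [wA] at ht
        have hb := ih.2 b (by omega)
        have ha := ih.1 a (by omega)
        by_cases hbn : b = .bnil
        · subst hbn; exact PA_cons_H ha
        · exact PA_comp hbn hb ha
    · intro t ht
      cases t with
      | bnil => exact PB_nil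
      | bh r => exact PB_cons_H (ih.2 r (by simp [wB] at ht; omega))
      | bud a r =>
        simp only [wB] at ht
        exact PB_comp (ih.1 a (by omega)) (ih.2 r (by omega))

lemma fA_spec (t : TA) : PA t := (AB_spec (wA t)).1 t le_rfl
lemma fB_spec (t : TB) : PB t := (AB_spec (wB t)).2 t le_rfl

-- ## injectivity of the flatteners

theorem AB_inj (n : ℕ) :
    (∀ t t' : TA, wA t ≤ n → fA t = fA t' → t = t') ∧
    (∀ t t' : TB, wB t ≤ n → fB t = fB t' → t = t') := by
  induction n with
  | zero =>
    constructor
    · intro t t' ht h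
      cases t with
      | acons b a => simp [wA] at ht
      | anil =>
        cases t' with
        | anil => rfl
        | acons b' a' =>
          exfalso
          by_cases hb' : b' = .bnil
          · subst hb'; rw [fA, fA] at h; simp at h
          · rw [fA, fA_acons_ne b' a' hb'] at h; simp at h
    · intro t t' ht h
      cases t with
      | bh r => simp [wB] at ht
      | bud a r => simp [wB] at ht
      | bnil =>
        cases t' with
        | bnil => rfl
        | bh r' => rw [fB, fB] at h; simp at h
        | bud a' r' => rw [fB, fB] at h; simp at h
  | succ n ih =>
    constructor
    · intro t t' ht h
      cases t with
      | anil =>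
        cases t' with
        | anil => rfl
        | acons b' a' =>
          exfalso
          by_cases hb' : b' = .bnil
          · subst hb'; rw [fA, fA] at h; simp at h
          · rw [fA, fA_acons_ne b' a' hb'] at h; simp at h
      | acons b a =>
        simp only [wA] at ht
        cases t' with
        | anil =>
          exfalso
          by_cases hb : b = .bnil
          · subst hb; rw [fA, fA] at h; simp at h
          · rw [fA, fA_acons_ne b a hb] at h; simp at h
        | acons b' a' =>
          by_cases hb : b = .bnil <;> by_cases hb' : b' = .bnil
          · subst hb hb'
            rw [fA, fA] at h
            injection h with _ h2
            rw [ih.1 a a' (by omega) h2]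
          · subst hb
            rw [fA, fA_acons_ne b' a' hb'] at h
            injection h with h1 h2; exact SStep.noConfusion h1
          · subst hb'
            rw [fA, fA_acons_ne b a hb] at h
            injection h with h1 h2; exact SStep.noConfusion h1
          · rw [fA_acons_ne b a hb, fA_acons_ne b' a' hb'] at h
            injection h with _ h2
            obtain ⟨hP, hQ⟩ := split_unique SStep.eff (d := SStep.D) rfl
              (fB_spec b).2.1 (fB_spec b').2.1 (fB_spec b).2.2.1 (fB_spec b').2.2.1 h2
            rw [ih.2 b b' (by omega) hP, ih.1 a a' (by omega) hQ]
    · intro t t' ht h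
      cases t with
      | bnil =>
        cases t' with
        | bnil => rfl
        | bh r' => rw [fB, fB] at h; simp at h
        | bud a' r' => rw [fB, fB] at h; simp at h
      | bh r =>
        cases t' with
        | bnil => rw [fB, fB] at h; simp at h
        | bh r' =>
          rw [fB, fB] at h
          injection h with _ h2
          rw [ih.2 r r' (by simp [wB] at ht; omega) h2]
        | bud a' r' =>
          rw [fB, fB] at h
          injection h with h1 h2; exact SStep.noConfusion h1
      | bud a r =>
        simp only [wB] at ht
        cases t' with
        | bnil => rw [fB, fB] at h; simp at h
        | bh r' =>
          rw [fB, fB] at h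
          injection h with h1 h2; exact SStep.noConfusion h1
        | bud a' r' =>
          rw [fB, fB] at h
          injection h with _ h2
          obtain ⟨hP, hQ⟩ := split_unique SStep.eff (d := SStep.D) rfl
            (fA_spec a).2.1 (fA_spec a').2.1 (fA_spec a).2.2.1 (fA_spec a').2.2.1 h2
          rw [ih.1 a a' (by omega) hP, ih.2 r r' (by omega) hQ]

lemma fA_inj (t t' : TA) (h : fA t = fA t') : t = t' := (AB_inj (wA t)).1 t t' le_rfl h

-- ## parsing: surjectivity of the flatteners

theorem AB_parse (n : ℕ) :
    (∀ L : List SStep, L.length ≤ n → (L.map SStep.eff).sum = 0 → NN SStep.eff L →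
      NoOddPeak L → ∃ t : TA, fA t = L) ∧
    (∀ L : List SStep, L.length ≤ n → (L.map SStep.eff).sum = 0 → NN SStep.eff L →
      NoEvenPeak L → ∃ t : TB, fB t = L) := by
  induction n with
  | zero =>
    constructor
    · intro L hl _ _ _
      rw [List.length_eq_zero_iff.mp (Nat.le_zero.mp hl)]
      exact ⟨.anil, rfl⟩
    · intro L hl _ _ _
      rw [List.length_eq_zero_iff.mp (Nat.le_zero.mp hl)]
      exact ⟨.bnil, rfl⟩
  | succ n ih =>
    have hsplit_facts : ∀ (R : List SStep), ((SStep.U :: R).map SStep.eff).sum = 0 →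
        NN SStep.eff (SStep.U :: R) →
        ∃ P Q, R = P ++ SStep.D :: Q ∧ (P.map SStep.eff).sum = 0 ∧ NN SStep.eff P ∧
          (Q.map SStep.eff).sum = 0 ∧ NN SStep.eff Q := by
      intro R hs hn
      exact firstReturn SStep.eff SStep.D R
        (fun x _ => seff_ge x) (fun x _ hx => seff_eq_neg_one hx)
        (by simp [SStep.eff] at hs; omega)
        (fun i => by have := hn (i+1); rw [hts_cons] at this; simp [SStep.eff] at this; omega)
    constructor
    · intro L hl hs hn hp
      match L with
      | [] => exact ⟨.anil, rfl⟩
      | .H :: R =>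
        obtain ⟨t, ht⟩ := ih.1 R (by simp at hl; omega) (by simpa [SStep.eff] using hs)
          (NN_cons_tail _ hn rfl) (noOddPeak_cons_H' hp)
        exact ⟨.acons .bnil t, by rw [fA, ht]⟩
      | .D :: R =>
        have := hn 1
        simp [hts, SStep.eff] at this
      | .U :: R =>
        obtain ⟨P, Q, hPQ, hPs, hPn, hQs, hQn⟩ := hsplit_facts R hs hn
        have hLeq : SStep.U :: R = SStep.U :: P ++ SStep.D :: Q := by rw [hPQ]; rfl
        have hlen : P.length + Q.length + 1 = R.length := by rw [hPQ]; simp; omega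
        have hlenR : R.length ≤ n := by simp at hl; omega
        -- P is nonempty
        have hPne : P ≠ [] := by
          rintro rfl
          have hpk : IsPeakAt (SStep.U :: R) 0 := by
            constructor
            · simp
            · rw [hPQ]; simp
          refine hp 0 hpk ?_
          rw [sHeight_eq, hLeq, hts_cons_append SStep.eff (u := SStep.U) (d := SStep.D)
            rfl rfl Q hPs]
          simp
        -- P has no even peaks
        have hPp : NoEvenPeak P := by
          intro j hpj heven
          have hlift := peak_lift_X (Y := Q) hpj
          rw [← hLeq] at hlift
          refine hp (j+1) hlift ?_
          obtain ⟨hjlt, -⟩ := List.getElem?_eq_some_iff.mp hpj.2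
          rw [sHeight_eq, hLeq, hts_cons_append SStep.eff (u := SStep.U) (d := SStep.D)
            rfl rfl Q hPs]
          simp only [if_neg (by omega : ¬ j + 1 + 1 = 0),
            if_pos (by omega : j + 1 + 1 ≤ P.length + 1)]
          exact odd_succ_of_even (by simpa [sHeight_eq] using heven)
        -- Q has no odd peaks
        have hQp : NoOddPeak Q := by
          intro j hpj hodd
          have hlift := peak_lift_Y (X := P) hpj
          rw [← hLeq] at hlift
          refine hp (P.length + 2 + j) hlift ?_
          rw [sHeight_eq, hLeq, hts_cons_append SStep.eff (u := SStep.U) (d := SStep.D)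
            rfl rfl Q hPs]
          simp only [if_neg (by omega : ¬ P.length + 2 + j + 1 = 0),
            if_neg (by omega : ¬ P.length + 2 + j + 1 ≤ P.length + 1)]
          have e2 : P.length + 2 + j + 1 - P.length - 2 = j + 1 := by omega
          rw [e2]
          exact (by simpa [sHeight_eq] using hodd)
        obtain ⟨tb, htb⟩ := ih.2 P (by omega) hPs hPn hPp
        obtain ⟨ta, hta⟩ := ih.1 Q (by omega) hQs hQn hQp
        have htbne : tb ≠ .bnil := by
          rintro rfl
          rw [fB] at htb
          exact hPne htb.symm
        exact ⟨.acons tb ta, by rw [fA_acons_ne tb ta htbne, htb, hta, ← hLeq]⟩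
    · intro L hl hs hn hp
      match L with
      | [] => exact ⟨.bnil, rfl⟩
      | .H :: R =>
        obtain ⟨t, ht⟩ := ih.2 R (by simp at hl; omega) (by simpa [SStep.eff] using hs)
          (NN_cons_tail _ hn rfl) (noEvenPeak_cons_H' hp)
        exact ⟨.bh t, by rw [fB, ht]⟩
      | .D :: R =>
        have := hn 1
        simp [hts, SStep.eff] at this
      | .U :: R =>
        obtain ⟨P, Q, hPQ, hPs, hPn, hQs, hQn⟩ := hsplit_facts R hs hn
        have hLeq : SStep.U :: R = SStep.U :: P ++ SStep.D :: Q := by rw [hPQ]; rfl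
        have hlen : P.length + Q.length + 1 = R.length := by rw [hPQ]; simp; omega
        have hlenR : R.length ≤ n := by simp at hl; omega
        -- P has no odd peaks
        have hPp : NoOddPeak P := by
          intro j hpj hodd
          have hlift := peak_lift_X (Y := Q) hpj
          rw [← hLeq] at hlift
          refine hp (j+1) hlift ?_
          obtain ⟨hjlt, -⟩ := List.getElem?_eq_some_iff.mp hpj.2
          rw [sHeight_eq, hLeq, hts_cons_append SStep.eff (u := SStep.U) (d := SStep.D)
            rfl rfl Q hPs]
          simp only [if_neg (by omega : ¬ j + 1 + 1 = 0),
            if_pos (by omega : j + 1 + 1 ≤ P.length + 1)]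
          exact even_succ_of_odd (by simpa [sHeight_eq] using hodd)
        -- Q has no even peaks
        have hQp : NoEvenPeak Q := by
          intro j hpj heven
          have hlift := peak_lift_Y (X := P) hpj
          rw [← hLeq] at hlift
          refine hp (P.length + 2 + j) hlift ?_
          rw [sHeight_eq, hLeq, hts_cons_append SStep.eff (u := SStep.U) (d := SStep.D)
            rfl rfl Q hPs]
          simp only [if_neg (by omega : ¬ P.length + 2 + j + 1 = 0),
            if_neg (by omega : ¬ P.length + 2 + j + 1 ≤ P.length + 1)]
          have e2 : P.length + 2 + j + 1 - P.length - 2 = j + 1 := by omega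
          rw [e2]
          exact (by simpa [sHeight_eq] using heven)
        obtain ⟨ta, hta⟩ := ih.1 P (by omega) hPs hPn hPp
        obtain ⟨tb, htb⟩ := ih.2 Q (by omega) hQs hQn hQp
        exact ⟨.bud ta tb, by rw [fB, hta, htb, ← hLeq]⟩

-- ## the equivalences

noncomputable def eqvA (m : ℕ) :
    {t : TA // wA t = m} ≃ {L : List SStep // IsSchroder L m ∧ NoOddPeak L} := by
  apply Equiv.ofBijective (f := fun t => ⟨fA t.1, by
    obtain ⟨h1, h2, h3, h4, h5, h6⟩ := fA_spec t.1
    exact ⟨⟨by rw [h1, t.2], h2, fun i => h3 i⟩, h4⟩⟩)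
  constructor
  · rintro ⟨t, ht⟩ ⟨t', ht'⟩ h
    simp only [Subtype.mk.injEq] at h ⊢
    exact fA_inj _ _ h
  · rintro ⟨L, ⟨hL1, hL2, hL3⟩, hL4⟩
    obtain ⟨t, ht⟩ := (AB_parse L.length).1 L le_rfl hL2 (fun i => hL3 i) hL4
    refine ⟨⟨t, ?_⟩, by simp [ht]⟩
    have := (fA_spec t).1
    rw [ht, hL1] at this
    omega

noncomputable def eqvT (n : ℕ) : {m : TM // wM m = n} ≃ {t : TA // wA t = n + 1} := by
  apply Equiv.ofBijective (f := fun m => ⟨.acons (ψ m.1).1 (ψ m.1).2, by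
    have := wψ m.1
    simp only [wA]
    omega⟩)
  constructor
  · rintro ⟨m, hm⟩ ⟨m', hm'⟩ h
    simp only [Subtype.mk.injEq, TA.acons.injEq] at h
    have : θ (ψ m).1 (ψ m).2 = θ (ψ m').1 (ψ m').2 := by rw [h.1, h.2]
    rw [θψ, θψ] at this
    simpa using this
  · rintro ⟨a, ha⟩
    cases a with
    | anil => simp [wA] at ha
    | acons b a' =>
      refine ⟨⟨θ b a', ?_⟩, ?_⟩
      · have h1 := wψ (θ b a')
        rw [ψθ] at h1
        simp only at h1
        simp only [wA] at ha
        omega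
      · simp only [Subtype.mk.injEq]
        rw [ψθ]

end S1


/-- For every integer `n ≥ 0`, the number of 3-Motzkin paths of length `n` equals the
number of Schröder paths of length `2 * (n + 1)` having no peak of odd height. -/
theorem stmt1 (n : ℕ) :
    Nat.card {L : List MStep // IsMotzkin3 L n} =
    Nat.card {L : List SStep // IsSchroder L (n + 1) ∧ NoOddPeak L} :=
  Nat.card_congr ((S1.eqvM n).symm.trans ((S1.eqvT n).trans (S1.eqvA (n+1))))
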